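/- Let n ≥ 1, let p : Fin n → ℝ be a probability vector (p i ≥ 0 for all i and ∑ i, p i = 1), and let d : Fin n → Fin n → ℝ satisfy d i j ≥ 0 for all i, j and d i j = 0 if and only if i = j. Then the expected communication distance ∑ i, ∑ j, p i * d i j * p j equals 0 if and only if there exists an index i₀ such that p i₀ = 1 and p j = 0 for all j ≠ i₀. (In the paper's terms: a grammar is optimal if and only if it has exactly one fixed word order.) -/
import Mathlib


theorem optimal_grammar_iff_fixed_word_order
    (n : ℕ) (hn : 1 ≤ n)
    (p : Fin n → ℝ) (hp0 : ∀ i, 0 ≤ p i) (hp1 : ∑ i, p i = 1)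
    (d : Fin n → Fin n → ℝ)
    (hd0 : ∀ i j, 0 ≤ d i j) (hd : ∀ i j, d i j = 0 ↔ i = j) :
    (∑ i, ∑ j, p i * d i j * p j = 0) ↔
      ∃ i₀ : Fin n, p i₀ = 1 ∧ ∀ j, j ≠ i₀ → p j = 0 := by
  constructor
  · intro hsum
    -- every term is zero
    have hterm : ∀ i j, p i * d i j * p j = 0 := by
      have h1 : ∀ i ∈ Finset.univ, (0:ℝ) ≤ ∑ j, p i * d i j * p j := by
        intro i _
        exact Finset.sum_nonneg fun j _ =>
          mul_nonneg (mul_nonneg (hp0 i) (hd0 i j)) (hp0 j)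
      have h2 := (Finset.sum_eq_zero_iff_of_nonneg h1).mp hsum
      intro i j
      have h3 := h2 i (Finset.mem_univ i)
      have h4 : ∀ j ∈ Finset.univ, (0:ℝ) ≤ p i * d i j * p j := fun j _ =>
        mul_nonneg (mul_nonneg (hp0 i) (hd0 i j)) (hp0 j)
      exact (Finset.sum_eq_zero_iff_of_nonneg h4).mp h3 j (Finset.mem_univ j)
    -- there exists i₀ with p i₀ > 0
    have hex : ∃ i₀, 0 < p i₀ := by
      by_contra h
      push_neg at h
      have : ∑ i, p i = 0 := Finset.sum_eq_zero fun i _ => le_antisymm (h i) (hp0 i)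
      rw [hp1] at this; norm_num at this
    obtain ⟨i₀, hi₀⟩ := hex
    have hzero : ∀ j, j ≠ i₀ → p j = 0 := by
      intro j hj
      by_contra hpj
      have hpj' : 0 < p j := lt_of_le_of_ne (hp0 j) (Ne.symm hpj)
      have hdij : 0 < d i₀ j := lt_of_le_of_ne (hd0 i₀ j)
        (fun h => (hj ((hd i₀ j).mp h.symm).symm))
      have : 0 < p i₀ * d i₀ j * p j := by positivity
      rw [hterm i₀ j] at this; exact lt_irrefl 0 this
    refine ⟨i₀, ?_, hzero⟩
    have : ∑ i, p i = p i₀ := by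
      rw [← Finset.sum_subset (Finset.subset_univ {i₀})]
      · simp
      · intro x _ hx
        exact hzero x (by simpa using hx)
    rw [← this, hp1]
  · rintro ⟨i₀, h1, h2⟩
    apply Finset.sum_eq_zero
    intro i _
    apply Finset.sum_eq_zero
    intro j _
    by_cases hi : i = i₀
    · by_cases hj : j = i₀
      · subst hi; subst hj
        simp [hd]
      · simp [h2 j hj]
    · simp [h2 i hi]
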